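/- Let k : (0,∞) → [0,∞) be measurable, γ ≥ 0, and define h_n recursively by h₀ = 1, h_n(t) = ∫₀^t h_{n-1}(s) k(t-s) ds, and H(t;γ) = Σ_{n≥0} γⁿ h_n(t). If β > 0 satisfies γ ∫₀^∞ e^{-βt} k(t) dt < 1, then ∫₀^∞ e^{-βt} H(t;γ) dt = 1/(β(1 - γK(β))) < ∞, and consequently limsup_{t→∞} (1/t) log H(t;γ) ≤ β. -/

import Mathlib

open MeasureTheory Filter
open scoped ENNReal

/-- With `h_n` the iterated convolutions of `k` starting from `1` and
`H(t;γ) = Σ γⁿ h_n(t)`, if `γ K(β) < 1` for some `β > 0`, then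
`∫₀^∞ e^{-βt} H(t;γ) dt = 1/(β(1-γK(β)))` and
`limsup_{t→∞} (1/t) log H(t;γ) ≤ β`. -/
theorem laplace_of_H_and_growth
    (k : ℝ → ℝ) (hk_meas : Measurable k) (hk_nonneg : ∀ t, 0 < t → 0 ≤ k t)
    (γ : ℝ) (hγ : 0 ≤ γ)
    (h : ℕ → ℝ → ℝ)
    (h0 : ∀ t, h 0 t = 1)
    (hrec : ∀ n t, h (n + 1) t = ∫ s in Set.Ioc (0 : ℝ) t, h n s * k (t - s))
    (H : ℝ → ℝ) (hH : ∀ t, H t = ∑' n : ℕ, γ ^ n * h n t)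
    (β : ℝ) (hβ : 0 < β)
    (hK : IntegrableOn (fun t => Real.exp (-β * t) * k t) (Set.Ioi 0))
    (hsmall : γ * (∫ t in Set.Ioi (0 : ℝ), Real.exp (-β * t) * k t) < 1) :
    (∫ t in Set.Ioi (0 : ℝ), Real.exp (-β * t) * H t)
        = 1 / (β * (1 - γ * (∫ t in Set.Ioi (0 : ℝ), Real.exp (-β * t) * k t))) ∧
    limsup (fun t : ℝ => Real.log (H t) / t) atTop ≤ β := by
  set K := ∫ t in Set.Ioi (0 : ℝ), Real.exp (-β * t) * k t with hKdef
  have hK0 : 0 ≤ K := setIntegral_nonneg measurableSet_Ioi fun t ht =>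
    mul_nonneg (Real.exp_nonneg _) (hk_nonneg t ht)
  have hγK0 : 0 ≤ γ * K := mul_nonneg hγ hK0
  have hγK1 : γ * K < 1 := hsmall
  -- a.e. statement that s ≠ t
  have hne : ∀ t : ℝ, ∀ᵐ s : ℝ, s ≠ t := by
    intro t
    have hs : {s : ℝ | ¬ s ≠ t} = {t} := by ext s; simp
    rw [ae_iff, hs]
    exact measure_singleton t
  -- the ENNReal kernel, extended by 0 outside Ioi 0
  set G : ℝ → ℝ≥0∞ :=
    (Set.Ioi (0:ℝ)).indicator (fun u => ENNReal.ofReal (Real.exp (-β * u) * k u)) with hGdef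
  have hkern : Measurable fun u : ℝ => ENNReal.ofReal (Real.exp (-β * u) * k u) :=
    ENNReal.measurable_ofReal.comp
      (((Real.measurable_exp.comp (measurable_id.const_mul (-β)))).mul hk_meas)
  have hGmeas : Measurable G := hkern.indicator measurableSet_Ioi
  have hGint : ∫⁻ u, G u = ENNReal.ofReal K := by
    rw [hGdef, lintegral_indicator measurableSet_Ioi]
    refine (ofReal_integral_eq_lintegral_ofReal hK ?_).symm
    filter_upwards [ae_restrict_mem measurableSet_Ioi] with t ht
    exact mul_nonneg (Real.exp_nonneg _) (hk_nonneg t ht)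
  -- translations and reflections of G
  have htransG : ∀ c : ℝ, ∫⁻ t, G (t - c) = ENNReal.ofReal K := by
    intro c
    rw [← hGint]
    exact (measurePreserving_sub_right volume c).lintegral_comp hGmeas
  have hreflG : ∀ c : ℝ, ∫⁻ s, G (c - s) = ENNReal.ofReal K := by
    intro c
    rw [← hGint]
    exact (Measure.measurePreserving_sub_left volume c).lintegral_comp hGmeas
  -- main induction : measurability, nonnegativity, exponential bound
  have main : ∀ n, Measurable (h n) ∧ (∀ t, 0 ≤ h n t) ∧
      (∀ t, 0 ≤ t → h n t ≤ K ^ n * Real.exp (β * t)) := by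
    intro n
    induction n with
    | zero =>
      refine ⟨by simp only [funext h0]; exact measurable_const, fun t => by simp [h0], ?_⟩
      intro t ht
      rw [h0, pow_zero, one_mul]
      exact Real.one_le_exp (by positivity)
    | succ n ih =>
      obtain ⟨hm, hnn, hbd⟩ := ih
      have hks : ∀ t : ℝ, Measurable fun s => h n s * k (t - s) := fun t =>
        hm.mul (hk_meas.comp (measurable_const.sub measurable_id))
      have hae : ∀ t : ℝ, 0 ≤ᵐ[volume.restrict (Set.Ioc 0 t)] fun s => h n s * k (t - s) := by
        intro t
        filter_upwards [ae_restrict_mem measurableSet_Ioc, ae_restrict_of_ae (hne t)]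
          with s hs hst
        have hts : 0 < t - s := lt_of_le_of_ne (sub_nonneg.2 hs.2) fun hc =>
          hst (by linarith)
        exact mul_nonneg (hnn s) (hk_nonneg _ hts)
      have hrep : ∀ t, h (n+1) t
          = (∫⁻ s in Set.Ioc 0 t, ENNReal.ofReal (h n s * k (t - s))).toReal := by
        intro t
        rw [hrec, integral_eq_lintegral_of_nonneg_ae (hae t) (hks t).aestronglyMeasurable]
      have hlbd : ∀ t : ℝ, 0 ≤ t →
          (∫⁻ s in Set.Ioc 0 t, ENNReal.ofReal (h n s * k (t - s)))
            ≤ ENNReal.ofReal (K ^ n * Real.exp (β * t)) * ENNReal.ofReal K := by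
        intro t ht
        have step1 : (∫⁻ s in Set.Ioc 0 t, ENNReal.ofReal (h n s * k (t - s)))
            ≤ ∫⁻ s in Set.Ioc 0 t, ENNReal.ofReal (K ^ n * Real.exp (β * t)) * G (t - s) := by
          refine lintegral_mono_ae ?_
          filter_upwards [ae_restrict_mem measurableSet_Ioc, ae_restrict_of_ae (hne t)]
            with s hs hst
          have hts : 0 < t - s := lt_of_le_of_ne (sub_nonneg.2 hs.2) fun hc => hst (by linarith)
          have hGv : G (t - s) = ENNReal.ofReal (Real.exp (-β * (t - s)) * k (t - s)) :=
            Set.indicator_of_mem (Set.mem_Ioi.2 hts) _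
          rw [hGv, ← ENNReal.ofReal_mul (by positivity)]
          refine ENNReal.ofReal_le_ofReal ?_
          have he : Real.exp (β * s) = Real.exp (β * t) * Real.exp (-β * (t - s)) := by
            rw [← Real.exp_add]; ring_nf
          have h1 : h n s * k (t - s) ≤ (K ^ n * Real.exp (β * s)) * k (t - s) :=
            mul_le_mul_of_nonneg_right (hbd s hs.1.le) (hk_nonneg _ hts)
          calc h n s * k (t - s) ≤ (K ^ n * Real.exp (β * s)) * k (t - s) := h1
            _ = K ^ n * Real.exp (β * t) * (Real.exp (-β * (t - s)) * k (t - s)) := by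
                rw [he]; ring
        have step2 : ∫⁻ s in Set.Ioc 0 t, ENNReal.ofReal (K ^ n * Real.exp (β * t)) * G (t - s)
            = ENNReal.ofReal (K ^ n * Real.exp (β * t)) * ∫⁻ s in Set.Ioc 0 t, G (t - s) :=
          lintegral_const_mul _ (hGmeas.comp (measurable_const.sub measurable_id))
        have step3 : (∫⁻ s in Set.Ioc 0 t, G (t - s)) ≤ ENNReal.ofReal K := by
          refine le_trans (setLIntegral_le_lintegral _ _) ?_
          rw [hreflG t]
        calc (∫⁻ s in Set.Ioc 0 t, ENNReal.ofReal (h n s * k (t - s)))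
            ≤ _ := step1
          _ = _ := step2
          _ ≤ ENNReal.ofReal (K ^ n * Real.exp (β * t)) * ENNReal.ofReal K :=
              mul_le_mul_right step3 _
      refine ⟨?_, ?_, ?_⟩
      · have heq : h (n+1) = fun t =>
            (∫⁻ s, ((Set.Ioc (0:ℝ) t).indicator
              (fun s => ENNReal.ofReal (h n s * k (t - s)))) s).toReal := by
          funext t
          rw [hrep t, lintegral_indicator measurableSet_Ioc]
        rw [heq]
        refine ENNReal.measurable_toReal.comp ?_
        refine Measurable.lintegral_prod_right (f := fun t s =>
            ((Set.Ioc (0:ℝ) t).indicator (fun s => ENNReal.ofReal (h n s * k (t - s)))) s) ?_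
        have : (Function.uncurry fun t s =>
            ((Set.Ioc (0:ℝ) t).indicator (fun s => ENNReal.ofReal (h n s * k (t - s)))) s)
            = Set.indicator {p : ℝ × ℝ | 0 < p.2 ∧ p.2 ≤ p.1}
                (fun p => ENNReal.ofReal (h n p.2 * k (p.1 - p.2))) := by
          funext p
          rcases p with ⟨t, s⟩
          by_cases hp : s ∈ Set.Ioc 0 t
          · rw [Function.uncurry_apply_pair, Set.indicator_of_mem hp,
              Set.indicator_of_mem (by exact hp)]
          · rw [Function.uncurry_apply_pair, Set.indicator_of_notMem hp,
              Set.indicator_of_notMem (by exact hp)]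
        rw [this]
        refine Measurable.indicator ?_ ?_
        · exact ENNReal.measurable_ofReal.comp
            ((hm.comp measurable_snd).mul
              (hk_meas.comp (measurable_fst.sub measurable_snd)))
        · exact MeasurableSet.inter (measurableSet_lt measurable_const measurable_snd)
            (measurableSet_le measurable_snd measurable_fst)
      · intro t
        rw [hrep t]
        exact ENNReal.toReal_nonneg
      · intro t ht
        rw [hrep t]
        refine ENNReal.toReal_le_of_le_ofReal (by positivity) ?_
        refine le_trans (hlbd t ht) ?_
        rw [← ENNReal.ofReal_mul (by positivity)]
        refine ENNReal.ofReal_le_ofReal (le_of_eq ?_)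
        rw [pow_succ]; ring
  -- notation for Laplace transforms
  set L : ℕ → ℝ≥0∞ := fun n => ∫⁻ t in Set.Ioi 0, ENNReal.ofReal (Real.exp (-β * t) * h n t)
    with hLdef
  have hL0 : L 0 = ENNReal.ofReal (1 / β) := by
    have hint : ∫ t in Set.Ioi (0:ℝ), Real.exp (-β * t) = 1 / β := by
      have h2 := integral_comp_mul_left_Ioi (fun x => Real.exp (-x)) 0 hβ
      simp only [mul_zero, integral_exp_neg_Ioi, neg_zero, Real.exp_zero, smul_eq_mul,
        mul_one] at h2
      rw [one_div, ← h2]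
      simp [neg_mul]
    rw [hLdef]
    simp only [h0, mul_one]
    rw [← hint]
    refine (ofReal_integral_eq_lintegral_ofReal ?_ ?_).symm
    · exact exp_neg_integrableOn_Ioi 0 hβ
    · filter_upwards with t using Real.exp_nonneg _
  -- re-derive the representation and bounds at top level
  have hae : ∀ n (t : ℝ), 0 ≤ᵐ[volume.restrict (Set.Ioc 0 t)] fun s => h n s * k (t - s) := by
    intro n t
    filter_upwards [ae_restrict_mem measurableSet_Ioc, ae_restrict_of_ae (hne t)]
      with s hs hst
    have hts : 0 < t - s := lt_of_le_of_ne (sub_nonneg.2 hs.2) fun hc => hst (by linarith)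
    exact mul_nonneg ((main n).2.1 s) (hk_nonneg _ hts)
  have hksm : ∀ n (t : ℝ), Measurable fun s => h n s * k (t - s) := fun n t =>
    (main n).1.mul (hk_meas.comp (measurable_const.sub measurable_id))
  have hrep : ∀ n t, h (n+1) t
      = (∫⁻ s in Set.Ioc 0 t, ENNReal.ofReal (h n s * k (t - s))).toReal := by
    intro n t
    rw [hrec, integral_eq_lintegral_of_nonneg_ae (hae n t) (hksm n t).aestronglyMeasurable]
  have hlbd : ∀ n (t : ℝ), 0 ≤ t →
      (∫⁻ s in Set.Ioc 0 t, ENNReal.ofReal (h n s * k (t - s)))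
        ≤ ENNReal.ofReal (K ^ n * Real.exp (β * t)) * ENNReal.ofReal K := by
    intro n t ht
    have step1 : (∫⁻ s in Set.Ioc 0 t, ENNReal.ofReal (h n s * k (t - s)))
        ≤ ∫⁻ s in Set.Ioc 0 t, ENNReal.ofReal (K ^ n * Real.exp (β * t)) * G (t - s) := by
      refine lintegral_mono_ae ?_
      filter_upwards [ae_restrict_mem measurableSet_Ioc, ae_restrict_of_ae (hne t)]
        with s hs hst
      have hts : 0 < t - s := lt_of_le_of_ne (sub_nonneg.2 hs.2) fun hc => hst (by linarith)
      have hGv : G (t - s) = ENNReal.ofReal (Real.exp (-β * (t - s)) * k (t - s)) :=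
        Set.indicator_of_mem (Set.mem_Ioi.2 hts) _
      rw [hGv, ← ENNReal.ofReal_mul (by positivity)]
      refine ENNReal.ofReal_le_ofReal ?_
      have he : Real.exp (β * s) = Real.exp (β * t) * Real.exp (-β * (t - s)) := by
        rw [← Real.exp_add]; ring_nf
      calc h n s * k (t - s)
          ≤ (K ^ n * Real.exp (β * s)) * k (t - s) :=
            mul_le_mul_of_nonneg_right ((main n).2.2 s hs.1.le) (hk_nonneg _ hts)
        _ = K ^ n * Real.exp (β * t) * (Real.exp (-β * (t - s)) * k (t - s)) := by
            rw [he]; ring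
    have step2 : ∫⁻ s in Set.Ioc 0 t, ENNReal.ofReal (K ^ n * Real.exp (β * t)) * G (t - s)
        = ENNReal.ofReal (K ^ n * Real.exp (β * t)) * ∫⁻ s in Set.Ioc 0 t, G (t - s) :=
      lintegral_const_mul _ (hGmeas.comp (measurable_const.sub measurable_id))
    refine le_trans step1 (le_trans (le_of_eq step2) (mul_le_mul_right ?_ _))
    refine le_trans (setLIntegral_le_lintegral _ _) ?_
    rw [hreflG t]
  -- the extended integrand for n
  have hFmeas : ∀ n, Measurable ((Set.Ioi (0:ℝ)).indicator
      (fun s => ENNReal.ofReal (Real.exp (-β * s) * h n s))) := by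
    intro n
    exact (ENNReal.measurable_ofReal.comp
      ((Real.measurable_exp.comp (measurable_id.const_mul (-β))).mul (main n).1)).indicator
      measurableSet_Ioi
  -- Laplace recursion
  have hLrec : ∀ n, L (n + 1) = ENNReal.ofReal K * L n := by
    intro n
    set F : ℝ → ℝ≥0∞ := (Set.Ioi (0:ℝ)).indicator
      (fun s => ENNReal.ofReal (Real.exp (-β * s) * h n s)) with hFdef
    have hFm : Measurable F := hFmeas n
    have hFint : ∫⁻ s, F s = L n := by
      rw [hFdef, lintegral_indicator measurableSet_Ioi, hLdef]
    -- pointwise identity for t > 0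
    have claimA : ∀ t : ℝ, 0 < t →
        ENNReal.ofReal (Real.exp (-β * t) * h (n+1) t) = ∫⁻ s, F s * G (t - s) := by
      intro t ht
      have hfin : (∫⁻ s in Set.Ioc 0 t, ENNReal.ofReal (h n s * k (t - s))) ≠ ⊤ := by
        refine ne_top_of_le_ne_top ?_ (hlbd n t ht.le)
        exact ENNReal.mul_ne_top ENNReal.ofReal_ne_top ENNReal.ofReal_ne_top
      have h1 : ENNReal.ofReal (h (n+1) t)
          = ∫⁻ s in Set.Ioc 0 t, ENNReal.ofReal (h n s * k (t - s)) := by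
        rw [hrep n t]
        exact ENNReal.ofReal_toReal hfin
      rw [ENNReal.ofReal_mul (Real.exp_nonneg _), h1,
        ← lintegral_const_mul _ (show Measurable fun s : ℝ => ENNReal.ofReal (h n s * k (t - s))
          from (hksm n t).ennreal_ofReal),
        ← lintegral_indicator measurableSet_Ioc]
      refine lintegral_congr_ae ?_
      filter_upwards [hne t] with s hst
      by_cases hs : s ∈ Set.Ioc 0 t
      · have hs2 : s < t := lt_of_le_of_ne hs.2 hst
        have hts : 0 < t - s := by linarith
        rw [Set.indicator_of_mem hs,
          show F s = ENNReal.ofReal (Real.exp (-β * s) * h n s) from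
            Set.indicator_of_mem (Set.mem_Ioi.2 hs.1) _,
          show G (t - s) = ENNReal.ofReal (Real.exp (-β * (t - s)) * k (t - s)) from
            Set.indicator_of_mem (Set.mem_Ioi.2 hts) _,
          ← ENNReal.ofReal_mul (Real.exp_nonneg _),
          ← ENNReal.ofReal_mul (mul_nonneg (Real.exp_nonneg _) ((main n).2.1 s))]
        congr 1
        have he : Real.exp (-β * s) * Real.exp (-β * (t - s)) = Real.exp (-β * t) := by
          rw [← Real.exp_add]; ring_nf
        rw [← he]; ring
      · have hs' : ¬ (0 < s) ∨ ¬ (s ≤ t) := by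
          rw [← not_and_or]; simpa [Set.mem_Ioc] using hs
        rw [Set.indicator_of_notMem hs]
        symm
        rcases hs' with hs1 | hs2
        · rw [show F s = 0 from Set.indicator_of_notMem (by simpa using hs1) _, zero_mul]
        · rw [not_le] at hs2
          have hts : ¬ (0 < t - s) := by simp only [not_lt]; linarith
          rw [show G (t - s) = 0 from Set.indicator_of_notMem (by simpa using hts) _, mul_zero]
    calc L (n+1) = ∫⁻ t in Set.Ioi 0, ∫⁻ s, F s * G (t - s) := by
          rw [hLdef]
          refine setLIntegral_congr_fun measurableSet_Ioi ?_
          intro t ht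
          exact claimA t ht
      _ = ∫⁻ t, ∫⁻ s, F s * G (t - s) := by
          rw [← lintegral_indicator measurableSet_Ioi]
          refine lintegral_congr fun t => ?_
          by_cases ht : t ∈ Set.Ioi 0
          · rw [Set.indicator_of_mem ht]
          · rw [Set.indicator_of_notMem ht]
            symm
            have hz : ∀ s : ℝ, F s * G (t - s) = 0 := by
              intro s
              by_cases hs : 0 < s
              · have hts : ¬ (0 < t - s) := by
                  simp only [Set.mem_Ioi, not_lt] at ht ⊢; linarith
                rw [show G (t - s) = 0 from Set.indicator_of_notMem (by simpa using hts) _,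
                  mul_zero]
              · rw [show F s = 0 from Set.indicator_of_notMem (by simpa using hs) _, zero_mul]
            simp only [hz, lintegral_zero]
      _ = ∫⁻ s, ∫⁻ t, F s * G (t - s) := by
          refine lintegral_lintegral_swap ?_
          exact ((hFm.comp measurable_snd).mul
            (hGmeas.comp (measurable_fst.sub measurable_snd))).aemeasurable
      _ = ∫⁻ s, F s * ENNReal.ofReal K := by
          refine lintegral_congr fun s => ?_
          rw [lintegral_const_mul _ (show Measurable fun u : ℝ => G (u - s)
            from hGmeas.comp (measurable_id.sub measurable_const)), htransG s]
      _ = ENNReal.ofReal K * L n := by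
          rw [lintegral_mul_const _ hFm, hFint, mul_comm]
  -- closed form for L n
  have hLn : ∀ n, L n = ENNReal.ofReal (K ^ n * (1 / β)) := by
    intro n
    induction n with
    | zero => rw [pow_zero, one_mul]; exact hL0
    | succ n ih =>
      rw [hLrec n, ih, ← ENNReal.ofReal_mul hK0]
      congr 1
      rw [pow_succ]; ring
  -- summability and pointwise bounds on H
  have hsum : ∀ t : ℝ, 0 ≤ t → Summable fun n => γ ^ n * h n t := by
    intro t ht
    refine Summable.of_nonneg_of_le
      (fun n => mul_nonneg (pow_nonneg hγ n) ((main n).2.1 t)) (fun n => ?_)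
      ((summable_geometric_of_lt_one hγK0 hγK1).mul_right (Real.exp (β * t)))
    calc γ ^ n * h n t ≤ γ ^ n * (K ^ n * Real.exp (β * t)) :=
          mul_le_mul_of_nonneg_left ((main n).2.2 t ht) (pow_nonneg hγ n)
      _ = (γ * K) ^ n * Real.exp (β * t) := by rw [mul_pow]; ring
  have h1K : 0 < 1 - γ * K := by linarith
  have hHub : ∀ t : ℝ, 0 ≤ t → H t ≤ (1 - γ * K)⁻¹ * Real.exp (β * t) := by
    intro t ht
    rw [hH]
    have hb : ∀ n : ℕ, γ ^ n * h n t ≤ (γ * K) ^ n * Real.exp (β * t) := by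
      intro n
      calc γ ^ n * h n t ≤ γ ^ n * (K ^ n * Real.exp (β * t)) :=
            mul_le_mul_of_nonneg_left ((main n).2.2 t ht) (pow_nonneg hγ n)
        _ = (γ * K) ^ n * Real.exp (β * t) := by rw [mul_pow]; ring
    refine le_trans (Summable.tsum_le_tsum hb (hsum t ht)
      ((summable_geometric_of_lt_one hγK0 hγK1).mul_right _)) (le_of_eq ?_)
    rw [tsum_mul_right, tsum_geometric_of_lt_one hγK0 hγK1]
  have hH1 : ∀ t : ℝ, 0 ≤ t → 1 ≤ H t := by
    intro t ht
    rw [hH]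
    have := Summable.le_tsum (hsum t ht) 0
      (fun j _ => mul_nonneg (pow_nonneg hγ j) ((main j).2.1 t))
    simpa [h0] using this
  have hH0 : ∀ t : ℝ, 0 ≤ H t := fun t => by
    rw [hH]; exact tsum_nonneg fun n => mul_nonneg (pow_nonneg hγ n) ((main n).2.1 t)
  -- Laplace transform of H
  have hSH : (∫⁻ t in Set.Ioi 0, ENNReal.ofReal (Real.exp (-β * t) * H t))
      = ENNReal.ofReal ((1 - γ * K)⁻¹ * (1 / β)) := by
    have step1 : (∫⁻ t in Set.Ioi 0, ENNReal.ofReal (Real.exp (-β * t) * H t))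
        = ∫⁻ t in Set.Ioi 0, ∑' n, ENNReal.ofReal (γ ^ n * (Real.exp (-β * t) * h n t)) := by
      refine setLIntegral_congr_fun measurableSet_Ioi ?_
      intro t ht
      have h1 : Real.exp (-β * t) * H t = ∑' n, γ ^ n * (Real.exp (-β * t) * h n t) := by
        rw [hH, ← tsum_mul_left]
        congr 1; funext n; ring
      dsimp only
      rw [h1, ENNReal.ofReal_tsum_of_nonneg
        (fun n => mul_nonneg (pow_nonneg hγ n)
          (mul_nonneg (Real.exp_nonneg _) ((main n).2.1 t)))
        (((hsum t ht.le).mul_left (Real.exp (-β * t))).congr fun n => by ring)]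
    have step3 : ∀ n : ℕ,
        (∫⁻ t in Set.Ioi 0, ENNReal.ofReal (γ ^ n * (Real.exp (-β * t) * h n t)))
          = ENNReal.ofReal ((γ * K) ^ n * (1 / β)) := by
      intro n
      have hpt : ∀ t : ℝ, ENNReal.ofReal (γ ^ n * (Real.exp (-β * t) * h n t))
          = ENNReal.ofReal (γ ^ n) * ENNReal.ofReal (Real.exp (-β * t) * h n t) :=
        fun t => ENNReal.ofReal_mul (pow_nonneg hγ n)
      simp_rw [hpt]
      rw [lintegral_const_mul _ (show Measurable fun t : ℝ =>
          ENNReal.ofReal (Real.exp (-β * t) * h n t)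
        from ((Real.measurable_exp.comp (measurable_id.const_mul (-β))).mul
          (main n).1).ennreal_ofReal)]
      rw [show (∫⁻ t in Set.Ioi 0, ENNReal.ofReal (Real.exp (-β * t) * h n t)) = L n from rfl,
        hLn n, ← ENNReal.ofReal_mul (pow_nonneg hγ n)]
      congr 1
      rw [mul_pow]; ring
    rw [step1, lintegral_tsum fun n => (show Measurable fun t : ℝ =>
        ENNReal.ofReal (γ ^ n * (Real.exp (-β * t) * h n t))
      from (measurable_const.mul ((Real.measurable_exp.comp
        (measurable_id.const_mul (-β))).mul (main n).1)).ennreal_ofReal).aemeasurable]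
    simp_rw [step3]
    rw [← ENNReal.ofReal_tsum_of_nonneg
      (fun n => mul_nonneg (pow_nonneg hγK0 n) (by positivity))
      (((summable_geometric_of_lt_one hγK0 hγK1).mul_right _))]
    congr 1
    rw [tsum_mul_right, tsum_geometric_of_lt_one hγK0 hγK1]
  -- measurability of H on Ioi 0
  have hHm : AEMeasurable H (volume.restrict (Set.Ioi 0)) := by
    have hm : Measurable fun t : ℝ => (∑' n, ENNReal.ofReal (γ ^ n * h n t)).toReal := by
      refine ENNReal.measurable_toReal.comp ?_
      refine Measurable.ennreal_tsum fun n => ?_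
      exact ENNReal.measurable_ofReal.comp (measurable_const.mul (main n).1)
    refine hm.aemeasurable.congr ?_
    filter_upwards [ae_restrict_mem measurableSet_Ioi] with t ht
    have hnn : ∀ n : ℕ, 0 ≤ γ ^ n * h n t :=
      fun n => mul_nonneg (pow_nonneg hγ n) ((main n).2.1 t)
    rw [← ENNReal.ofReal_tsum_of_nonneg hnn (hsum t (le_of_lt ht)),
      ENNReal.toReal_ofReal (tsum_nonneg hnn), ← hH]
  -- first conclusion
  have hconc1 : (∫ t in Set.Ioi (0:ℝ), Real.exp (-β * t) * H t)
      = 1 / (β * (1 - γ * K)) := by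
    rw [integral_eq_lintegral_of_nonneg_ae ?_ ?_]
    · rw [hSH, ENNReal.toReal_ofReal
        (mul_nonneg (inv_nonneg.2 h1K.le) (by positivity))]
      rw [one_div, one_div, mul_inv_rev]
    · filter_upwards [ae_restrict_mem measurableSet_Ioi] with t ht
      exact mul_nonneg (Real.exp_nonneg _) (hH0 t)
    · exact (((Real.measurable_exp.comp
        (measurable_id.const_mul (-β))).aemeasurable.mul hHm)).aestronglyMeasurable
  refine ⟨hconc1, ?_⟩
  -- growth bound
  have hMpos : 0 < (1 - γ * K)⁻¹ := inv_pos.2 h1K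
  have hub : ∀ t : ℝ, 0 < t →
      Real.log (H t) / t ≤ Real.log ((1 - γ * K)⁻¹) / t + β := by
    intro t ht
    have hpos : (0:ℝ) < H t := lt_of_lt_of_le one_pos (hH1 t ht.le)
    have hlog : Real.log (H t) ≤ Real.log ((1 - γ * K)⁻¹) + β * t := by
      have hl := Real.log_le_log hpos (hHub t ht.le)
      rwa [Real.log_mul (ne_of_gt hMpos) (Real.exp_ne_zero _), Real.log_exp] at hl
    calc Real.log (H t) / t ≤ (Real.log ((1 - γ * K)⁻¹) + β * t) / t :=
          (div_le_div_iff_of_pos_right ht).mpr hlog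
      _ = Real.log ((1 - γ * K)⁻¹) / t + β := by
          rw [add_div, mul_div_assoc, div_self (ne_of_gt ht), mul_one]
  have htend : Tendsto (fun t : ℝ => Real.log ((1 - γ * K)⁻¹) / t + β) atTop (nhds β) := by
    have h1 : Tendsto (fun t : ℝ => Real.log ((1 - γ * K)⁻¹) / t) atTop (nhds 0) :=
      Tendsto.div_atTop tendsto_const_nhds tendsto_id
    simpa using h1.add_const β
  have hevle : (fun t : ℝ => Real.log (H t) / t) ≤ᶠ[atTop]
      fun t => Real.log ((1 - γ * K)⁻¹) / t + β :=
    eventually_atTop.2 ⟨1, fun t ht => hub t (by linarith)⟩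
  have hco : IsCoboundedUnder (· ≤ ·) atTop (fun t : ℝ => Real.log (H t) / t) := by
    refine isCoboundedUnder_le_of_eventually_le atTop (x := 0) ?_
    refine eventually_atTop.2 ⟨1, fun t ht => ?_⟩
    have h1t : (0:ℝ) < t := by linarith
    exact div_nonneg (Real.log_nonneg (hH1 t h1t.le)) h1t.le
  refine le_trans (limsup_le_limsup hevle hco htend.isBoundedUnder_le) ?_
  exact le_of_eq htend.limsup_eq
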